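/- Let n = p + q + z with p ≥ 1, q ≥ 1, z ≥ 0, and let J = diag(I_p, −I_q, 0_z) ∈ ℂ^{n×n}. Let A, B ∈ ℂ^{n×n} be Hermitian and suppose there exists an invertible U ∈ ℂ^{n×n} with Uᴴ B U = J and Uᴴ A U = diag(a₁, …, aₙ) where all a_i ≥ 0, a₁ ≤ … ≤ a_p, and a_{p+1} ≤ … ≤ a_{p+q}. Let k₊ ≤ p, k₋ ≤ q, k = k₊ + k₋ ≥ 1, let J_k = diag(I_{k₊}, −I_{k₋}) ∈ ℂ^{k×k}, and let D = diag(D₊, D₋) ∈ ℂ^{k×k} be block diagonal with D₊ ∈ ℂ^{k₊×k₊} and D₋ ∈ ℂ^{k₋×k₋} both Hermitian positive semi-definite, with eigenvalues ω₁⁺ ≥ … ≥ ω_{k₊}⁺ ≥ 0 and ω₁⁻ ≥ … ≥ ω_{k₋}⁻ ≥ 0 respectively. Then the real number Σ_{i=1}^{k₊} ω_i⁺ a_i + Σ_{i=1}^{k₋} ω_i⁻ a_{p+i} is the minimum (a lower bound that is attained) of the set { t ∈ ℝ : ∃ X ∈ ℂ^{n×k}, Xᴴ B X = J_k and t = Re(trace(D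 Xᴴ A X)) }. -/

import Mathlib

open Matrix BigOperators Finset
open scoped ComplexOrder

set_option maxHeartbeats 1000000

lemma abelHead : ∀ (n : ℕ) (w g : ℕ → ℝ), (∀ j, 0 ≤ w j) → (∀ j, w (j+1) ≤ w j) →
    (∀ s, s ≤ n → 0 ≤ ∑ j ∈ range s, g j) → 0 ≤ ∑ j ∈ range n, w j * g j := by
  intro n
  induction n with
  | zero => intro w g _ _ _; simp
  | succ n ih =>
    intro w g hw0 hwa hh
    have hanti : ∀ i j, i ≤ j → w j ≤ w i := fun i j hij =>
      antitone_nat_of_succ_le hwa hij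
    have key : ∑ j ∈ range (n+1), w j * g j
        = ∑ j ∈ range (n+1), (w (min j n) - w n) * g j + w n * ∑ j ∈ range (n+1), g j := by
      rw [Finset.mul_sum, ← Finset.sum_add_distrib]
      refine Finset.sum_congr rfl fun j hj => ?_
      have : j ≤ n := by simpa [Nat.lt_succ_iff] using hj
      rw [min_eq_left this]; ring
    rw [key]
    have h1 : 0 ≤ ∑ j ∈ range (n+1), (w (min j n) - w n) * g j := by
      rw [Finset.sum_range_succ]
      simp only [min_self, sub_self, zero_mul, add_zero]
      exact ih (fun j => w (min j n) - w n) g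
        (fun j => sub_nonneg.2 (hanti _ _ (min_le_right _ _)))
        (fun j => by
          have : min j n ≤ min (j+1) n := by omega
          exact sub_le_sub_right (hanti _ _ this) _)
        (fun s hs => hh s (by omega))
    have h2 : 0 ≤ w n * ∑ j ∈ range (n+1), g j :=
      mul_nonneg (hw0 n) (hh (n+1) le_rfl)
    linarith

lemma abelTail : ∀ (n : ℕ) (w g : ℕ → ℝ), (∀ j, 0 ≤ w j) → (∀ j, w j ≤ w (j+1)) →
    (∀ s, s ≤ n → 0 ≤ ∑ j ∈ Finset.Ico s n, g j) → 0 ≤ ∑ j ∈ range n, w j * g j := by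
  intro n
  induction n with
  | zero => intro w g _ _ _; simp
  | succ n ih =>
    intro w g hw0 hwm hh
    have hmono : ∀ i j, i ≤ j → w i ≤ w j := fun i j hij =>
      monotone_nat_of_le_succ hwm hij
    have key : ∑ j ∈ range (n+1), w j * g j
        = ∑ j ∈ range (n+1), (w j - w 0) * g j + w 0 * ∑ j ∈ range (n+1), g j := by
      rw [Finset.mul_sum, ← Finset.sum_add_distrib]
      exact Finset.sum_congr rfl fun j hj => by ring
    rw [key]
    have h2 : 0 ≤ w 0 * ∑ j ∈ range (n+1), g j := by
      have := hh 0 (by omega)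
      simpa using mul_nonneg (hw0 0) (by simpa using this)
    have h1 : 0 ≤ ∑ j ∈ range (n+1), (w j - w 0) * g j := by
      rw [Finset.sum_range_succ']
      simp only [sub_self, zero_mul, add_zero]
      refine ih (fun j => w (j+1) - w 0) (fun j => g (j+1))
        (fun j => sub_nonneg.2 (hmono _ _ (by omega)))
        (fun j => sub_le_sub_right (hwm (j+1)) _)
        (fun s hs => ?_)
      have hshift : ∑ j ∈ Finset.Ico s n, g (j+1) = ∑ j ∈ Finset.Ico (s+1) (n+1), g j := by
        rw [Finset.sum_Ico_eq_sum_range, Finset.sum_Ico_eq_sum_range]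
        have : n + 1 - (s+1) = n - s := by omega
        rw [this]
        exact Finset.sum_congr rfl fun j _ => by ring_nf
      rw [hshift]
      exact hh (s+1) (by omega)
    linarith


lemma reTraceNonneg {d : ℕ} {M : Matrix (Fin d) (Fin d) ℂ} (hM : M.PosSemidef) :
    0 ≤ (Matrix.trace M).re := by
  have h : ∀ j, 0 ≤ (M j j).re := by
    intro j
    exact (Complex.nonneg_iff.mp hM.diag_nonneg).1
  calc (0:ℝ) ≤ ∑ j, (M j j).re := Finset.sum_nonneg fun j _ => h j
  _ = (Matrix.trace M).re := by simp [Matrix.trace, Matrix.diag, Complex.re_sum]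

lemma projTrace (s' s d : ℕ) (M : Matrix (Fin s') (Fin s) ℂ) (W : Matrix (Fin d) (Fin s) ℂ)
    (hpsd : (Wᴴ * W + Mᴴ * M - 1).PosSemidef) :
    (s : ℝ) - s' ≤ (Matrix.trace (Wᴴ * W)).re := by
  classical
  let K := LinearMap.ker (Matrix.toEuclideanLin (𝕜 := ℂ) M)
  have hrank : s ≤ Module.finrank ℂ K + s' := by
    have h1 := LinearMap.finrank_range_add_finrank_ker (Matrix.toEuclideanLin (𝕜 := ℂ) M)
    have h2 : Module.finrank ℂ (LinearMap.range (Matrix.toEuclideanLin (𝕜 := ℂ) M)) ≤ s' := by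
      simpa using Submodule.finrank_le (LinearMap.range (Matrix.toEuclideanLin (𝕜 := ℂ) M))
    have h3 : Module.finrank ℂ (EuclideanSpace ℂ (Fin s)) = s := by simp
    show s ≤ Module.finrank ℂ (LinearMap.ker (Matrix.toEuclideanLin (𝕜 := ℂ) M)) + s'
    omega
  let OB := stdOrthonormalBasis ℂ K
  set V : Matrix (Fin s) (Fin (Module.finrank ℂ K)) ℂ :=
    Matrix.of (fun i t => (OB t : EuclideanSpace ℂ (Fin s)) i) with hV
  have hVV : Vᴴ * V = 1 := by
    ext t t'
    have horth : (inner ℂ ((OB t : EuclideanSpace ℂ (Fin s))) ((OB t' : EuclideanSpace ℂ (Fin s))) : ℂ)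
        = if t = t' then 1 else 0 := by
      rw [← Submodule.coe_inner]
      exact orthonormal_iff_ite.mp OB.orthonormal t t'
    rw [PiLp.inner_apply] at horth
    simp only [RCLike.inner_apply] at horth
    rw [Matrix.mul_apply, Matrix.one_apply]
    rw [← horth]
    refine Finset.sum_congr rfl fun i _ => ?_
    simp only [Matrix.conjTranspose_apply, hV, Matrix.of_apply, starRingEnd_apply]
    exact mul_comm _ _
  have hMV : M * V = 0 := by
    ext i t
    have hmem : Matrix.toEuclideanLin (𝕜 := ℂ) M (OB t : EuclideanSpace ℂ (Fin s)) = 0 :=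
      LinearMap.mem_ker.1 (OB t).2
    rw [Matrix.toEuclideanLin_apply] at hmem
    have h2 : M *ᵥ (WithLp.equiv 2 (Fin s → ℂ)) ((OB t : EuclideanSpace ℂ (Fin s))) = 0 := by
      have := congrArg (WithLp.equiv 2 (Fin s' → ℂ)) hmem
      simpa using this
    have h3 := congrFun h2 i
    rw [Matrix.zero_apply, Matrix.mul_apply]
    simpa [Matrix.mulVec, dotProduct, hV] using h3
  set S := Wᴴ * W with hS
  have hSpsd : S.PosSemidef := Matrix.posSemidef_conjTranspose_mul_self W
  set P := V * Vᴴ with hP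
  have hPP : P * P = P := by
    rw [hP, Matrix.mul_assoc, ← Matrix.mul_assoc Vᴴ, hVV, Matrix.one_mul]
  have hPH : Pᴴ = P := by
    rw [hP]; simp [Matrix.conjTranspose_mul]
  have hidem : (1 - P) * (1 - P) = 1 - P := by
    rw [sub_mul, one_mul, mul_sub, mul_one, hPP, sub_self, sub_zero]
  have split : Matrix.trace S = Matrix.trace (S * (1 - P)) + Matrix.trace (Vᴴ * S * V) := by
    have h1 : Matrix.trace (S * P) = Matrix.trace (Vᴴ * S * V) := by
      rw [hP, ← Matrix.mul_assoc, Matrix.trace_mul_comm (S * V) Vᴴ, ← Matrix.mul_assoc]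
    rw [← h1, Matrix.mul_sub, Matrix.mul_one, Matrix.trace_sub]
    ring
  have h1 : 0 ≤ (Matrix.trace (S * (1 - P))).re := by
    have hkey : 0 ≤ (Matrix.trace ((1 - P)ᴴ * S * (1 - P))).re :=
      reTraceNonneg (hSpsd.conjTranspose_mul_mul_same (1 - P))
    have he : (1 - P)ᴴ * S * (1 - P) = (1 - P) * (S * (1 - P)) := by
      have : (1 - P)ᴴ = 1 - P := by simp [hPH]
      rw [this, Matrix.mul_assoc]
    rw [he, Matrix.trace_mul_comm, Matrix.mul_assoc, hidem] at hkey
    exact hkey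
  have h2 : (Module.finrank ℂ K : ℝ) ≤ (Matrix.trace (Vᴴ * S * V)).re := by
    have hMVzero : Vᴴ * (Mᴴ * M) * V = 0 := by
      have he : Vᴴ * (Mᴴ * M) * V = (M * V)ᴴ * (M * V) := by
        rw [Matrix.conjTranspose_mul]
        simp [Matrix.mul_assoc]
      rw [he, hMV]
      simp
    have e1 : Vᴴ * (S + Mᴴ * M - 1) * V = Vᴴ * S * V + Vᴴ * (Mᴴ * M) * V - Vᴴ * V := by
      rw [Matrix.mul_sub, Matrix.mul_add, Matrix.mul_one, Matrix.sub_mul, Matrix.add_mul]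
    have hdecomp : Vᴴ * S * V = Vᴴ * (S + Mᴴ * M - 1) * V + 1 := by
      rw [e1, hMVzero, hVV]
      abel
    rw [hdecomp, Matrix.trace_add, Complex.add_re]
    have hpsd2 : 0 ≤ (Matrix.trace (Vᴴ * (S + Mᴴ * M - 1) * V)).re :=
      reTraceNonneg (hpsd.conjTranspose_mul_mul_same V)
    have htr1 : ((Matrix.trace (1 : Matrix (Fin (Module.finrank ℂ K)) (Fin (Module.finrank ℂ K)) ℂ))).re = (Module.finrank ℂ K : ℝ) := by simp
    rw [htr1]
    linarith
  have hfin : (Module.finrank ℂ K : ℝ) ≤ (Matrix.trace S).re := by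
    rw [split, Complex.add_re]; linarith
  have hcast : (s : ℝ) - s' ≤ (Module.finrank ℂ K : ℝ) := by
    have : (s : ℝ) ≤ (Module.finrank ℂ K : ℝ) + s' := by exact_mod_cast hrank
    linarith
  linarith


lemma masterIneq (m r : ℕ) (hr : r ≤ m) (b w : ℕ → ℝ)
    (hb0 : ∀ i, 0 ≤ b i) (hbm : ∀ i, b i ≤ b (i+1))
    (hw0 : ∀ j, 0 ≤ w j) (hwa : ∀ j, w (j+1) ≤ w j)
    (F : ℕ → ℕ → ℝ) (hF0 : ∀ i j, 0 ≤ F i j)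
    (hproj : ∀ s' s : ℕ, s' ≤ m → s ≤ r →
      (s : ℝ) - s' ≤ ∑ i ∈ Finset.Ico s' m, ∑ j ∈ range s, F i j) :
    ∑ j ∈ range r, w j * b j ≤ ∑ j ∈ range r, w j * (∑ i ∈ range m, b i * F i j) := by
  have key : 0 ≤ ∑ j ∈ range r, w j * ((∑ i ∈ range m, b i * F i j) - b j) := by
    apply abelHead r w _ hw0 hwa
    intro s hs
    -- head condition
    have hswap : ∑ j ∈ range s, (∑ i ∈ range m, b i * F i j)
        = ∑ i ∈ range m, b i * (∑ j ∈ range s, F i j) := by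
      rw [Finset.sum_comm]
      exact Finset.sum_congr rfl fun i _ => by rw [Finset.mul_sum]
    have htail : 0 ≤ ∑ i ∈ range m, b i * ((∑ j ∈ range s, F i j) - (if i < s then 1 else 0)) := by
      apply abelTail m b _ hb0 hbm
      intro s' hs'
      have hsum_split : ∑ i ∈ Finset.Ico s' m, ((∑ j ∈ range s, F i j) - (if i < s then 1 else 0))
          = (∑ i ∈ Finset.Ico s' m, ∑ j ∈ range s, F i j)
            - ∑ i ∈ Finset.Ico s' m, (if i < s then (1:ℝ) else 0) := by
        rw [Finset.sum_sub_distrib]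
      rw [hsum_split]
      have hcount : ∑ i ∈ Finset.Ico s' m, (if i < s then (1:ℝ) else 0) = ((s - s' : ℕ) : ℝ) := by
        rw [← Finset.sum_filter]
        have hfe : (Finset.Ico s' m).filter (· < s) = Finset.Ico s' (min s m) := by
          ext x
          simp only [Finset.mem_filter, Finset.mem_Ico, lt_min_iff]
          omega
        rw [hfe]
        simp only [Finset.sum_const, nsmul_eq_mul, mul_one, Nat.card_Ico]
        congr 1
        omega
      rw [hcount]
      rcases le_or_gt s' s with hcase | hcase
      · have := hproj s' s hs' (le_trans (by omega) (le_refl r))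
        have hc : ((s - s' : ℕ) : ℝ) = (s:ℝ) - s' := by
          rw [Nat.cast_sub hcase]
        rw [hc]
        have hsle : s ≤ r := by omega
        have := hproj s' s hs' hsle
        linarith
      · have : (s - s' : ℕ) = 0 := by omega
        rw [this]
        simp only [Nat.cast_zero, sub_zero]
        exact Finset.sum_nonneg fun i _ => Finset.sum_nonneg fun j _ => hF0 i j
    have hdist : ∑ i ∈ range m, b i * ((∑ j ∈ range s, F i j) - (if i < s then 1 else 0))
        = (∑ i ∈ range m, b i * (∑ j ∈ range s, F i j))
          - ∑ i ∈ range m, b i * (if i < s then 1 else 0) := by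
      rw [← Finset.sum_sub_distrib]
      exact Finset.sum_congr rfl fun i _ => by ring
    have hbsum : ∑ i ∈ range m, b i * (if i < s then 1 else 0) = ∑ j ∈ range s, b j := by
      have hsub : range s ⊆ range m := Finset.range_subset_range.2 (by omega)
      rw [← Finset.sum_subset hsub (fun x _ hx => ?_)]
      · exact Finset.sum_congr rfl fun i hi => by
          rw [if_pos (Finset.mem_range.1 hi), mul_one]
      · rw [if_neg (by simpa using hx), mul_zero]
    rw [Finset.sum_sub_distrib, hswap]
    rw [hdist, hbsum] at htail
    linarith
  have : ∑ j ∈ range r, w j * ((∑ i ∈ range m, b i * F i j) - b j)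
      = (∑ j ∈ range r, w j * (∑ i ∈ range m, b i * F i j)) - ∑ j ∈ range r, w j * b j := by
    rw [← Finset.sum_sub_distrib]
    exact Finset.sum_congr rfl fun j _ => by ring
  linarith [key, this.symm ▸ key]


lemma finSumSplit {Mo : Type*} [AddCommMonoid Mo] (m s' : ℕ) (h : s' ≤ m) (f : Fin m → Mo) :
    ∑ i : Fin m, f i = (∑ i : Fin s', f ⟨i, lt_of_lt_of_le i.isLt h⟩) +
      ∑ i : Fin (m - s'), f ⟨s' + i, by omega⟩ := by
  have e : s' + (m - s') = m := by omega
  have h1 : ∑ i : Fin m, f i = ∑ i : Fin (s' + (m - s')), f (Fin.cast e i) :=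
    (Fintype.sum_equiv (finCongr e) _ _ (fun i => rfl)).symm
  rw [h1, Fin.sum_univ_add]
  congr 1

lemma gramProj (m r : ℕ) (u : Matrix (Fin m) (Fin r) ℂ)
    (hGram : (uᴴ * u - 1).PosSemidef) (s' s : ℕ) (hs' : s' ≤ m) (hs : s ≤ r) :
    (s : ℝ) - s' ≤ ∑ i ∈ Finset.Ico s' m, ∑ j ∈ range s,
      (if h : i < m ∧ j < r then Complex.normSq (u ⟨i, h.1⟩ ⟨j, h.2⟩) else 0) := by
  set M : Matrix (Fin s') (Fin s) ℂ :=
    Matrix.of (fun i j => u ⟨i, lt_of_lt_of_le i.isLt hs'⟩ ⟨j, lt_of_lt_of_le j.isLt hs⟩) with hM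
  set W : Matrix (Fin (m - s')) (Fin s) ℂ :=
    Matrix.of (fun i j => u ⟨s' + i, by omega⟩ ⟨j, lt_of_lt_of_le j.isLt hs⟩) with hW
  have hpsd : (Wᴴ * W + Mᴴ * M - 1).PosSemidef := by
    have hsub : ((uᴴ * u - 1).submatrix (Fin.castLE hs) (Fin.castLE hs)).PosSemidef :=
      hGram.submatrix _
    have he : Wᴴ * W + Mᴴ * M - 1
        = (uᴴ * u - 1).submatrix (Fin.castLE hs) (Fin.castLE hs) := by
      ext j j'
      have hc : ∀ (j0 : Fin s), (Fin.castLE hs j0 : Fin r) = ⟨j0, lt_of_lt_of_le j0.isLt hs⟩ :=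
        fun _ => rfl
      simp only [Matrix.sub_apply, Matrix.add_apply, Matrix.mul_apply,
        Matrix.conjTranspose_apply, Matrix.submatrix_apply, Matrix.one_apply, hM, hW,
        Matrix.of_apply]
      have hite : (if (Fin.castLE hs j : Fin r) = Fin.castLE hs j' then (1:ℂ) else 0)
          = if j = j' then 1 else 0 := by
        congr 1
        simp [Fin.ext_iff]
      rw [hite]
      have hsplit := finSumSplit m s' hs'
        (fun i => star (u i (Fin.castLE hs j)) * u i (Fin.castLE hs j'))
      simp only [hc] at hsplit
      simp only [hc]
      rw [hsplit]
      ring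
    rw [he]
    exact hsub
  have hkey := projTrace s' s (m - s') M W hpsd
  have htr : (Matrix.trace (Wᴴ * W)).re
      = ∑ i ∈ Finset.Ico s' m, ∑ j ∈ range s,
        (if h : i < m ∧ j < r then Complex.normSq (u ⟨i, h.1⟩ ⟨j, h.2⟩) else 0) := by
    have h1 : Matrix.trace (Wᴴ * W) = ∑ j : Fin s, ∑ i : Fin (m - s'),
        star (W i j) * W i j := by
      simp [Matrix.trace, Matrix.diag, Matrix.mul_apply, Matrix.conjTranspose_apply]
    rw [h1]
    rw [Complex.re_sum]
    have h2 : ∀ j : Fin s, (∑ i : Fin (m - s'), star (W i j) * W i j).re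
        = ∑ i : Fin (m - s'), Complex.normSq (W i j) := by
      intro j
      rw [Complex.re_sum]
      refine Finset.sum_congr rfl fun i _ => ?_
      have hst : star (W i j) = (starRingEnd ℂ) (W i j) := rfl
      rw [hst, ← Complex.normSq_eq_conj_mul_self]
      simp
    rw [Finset.sum_congr rfl (fun j _ => h2 j), Finset.sum_comm]
    rw [Finset.sum_Ico_eq_sum_range]
    rw [← Fin.sum_univ_eq_sum_range (fun i => ∑ j ∈ range s,
      (if h : s' + i < m ∧ j < r then Complex.normSq (u ⟨s' + i, h.1⟩ ⟨j, h.2⟩) else 0)) (m - s')]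
    refine Finset.sum_congr rfl fun i _ => ?_
    rw [← Fin.sum_univ_eq_sum_range (fun j =>
      (if h : s' + (i:ℕ) < m ∧ j < r then Complex.normSq (u ⟨s' + i, h.1⟩ ⟨j, h.2⟩) else 0)) s]
    refine Finset.sum_congr rfl fun j _ => ?_
    rw [dif_pos ⟨by omega, lt_of_lt_of_le j.isLt hs⟩]
    simp [hW]
  rw [← htr]
  exact hkey


lemma masterGram (m r : ℕ) (hr : r ≤ m) (b w : ℕ → ℝ)
    (hb0 : ∀ i, 0 ≤ b i) (hbm : ∀ i, b i ≤ b (i+1))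
    (hw0 : ∀ j, 0 ≤ w j) (hwa : ∀ j, w (j+1) ≤ w j)
    (u : Matrix (Fin m) (Fin r) ℂ) (hGram : (uᴴ * u - 1).PosSemidef) :
    ∑ j ∈ range r, w j * b j ≤ ∑ j ∈ range r, w j * (∑ i ∈ range m, b i *
      (if h : i < m ∧ j < r then Complex.normSq (u ⟨i, h.1⟩ ⟨j, h.2⟩) else 0)) := by
  apply masterIneq m r hr b w hb0 hbm hw0 hwa
  · intro i j
    by_cases h : i < m ∧ j < r
    · rw [dif_pos h]; exact Complex.normSq_nonneg _
    · rw [dif_neg h]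
  · exact gramProj m r u hGram



set_option maxHeartbeats 1000000 in
lemma reducedLB (p q z kp km : ℕ) (hp : 1 ≤ p) (hq : 1 ≤ q)
    (hkp : kp ≤ p) (hkm : km ≤ q)
    (a : Fin (p + q + z) → ℝ) (ha : ∀ i, 0 ≤ a i)
    (hsortp : ∀ i j : Fin (p + q + z), i ≤ j → (j : ℕ) < p → a i ≤ a j)
    (hsortm : ∀ i j : Fin (p + q + z), p ≤ (i : ℕ) → i ≤ j → (j : ℕ) < p + q → a i ≤ a j)
    (ωp : Fin kp → ℝ) (hωp : Antitone ωp) (hωp0 : ∀ i, 0 ≤ ωp i)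
    (ωm : Fin km → ℝ) (hωm : Antitone ωm) (hωm0 : ∀ i, 0 ≤ ωm i)
    (Y : Matrix (Fin (p + q + z)) (Fin (kp + km)) ℂ)
    (hYc : Yᴴ * (Matrix.diagonal fun i : Fin (p + q + z) =>
        if (i : ℕ) < p then (1 : ℂ) else if (i : ℕ) < p + q then -1 else 0) * Y
      = Matrix.diagonal fun j : Fin (kp + km) => if (j : ℕ) < kp then (1 : ℂ) else -1) :
    ((∑ i : Fin kp, ωp i * a ⟨(i : ℕ), by omega⟩) +
     (∑ i : Fin km, ωm i * a ⟨p + (i : ℕ), by omega⟩)) ≤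
    ∑ j : Fin (kp + km),
      (if h : (j : ℕ) < kp then ωp ⟨j, h⟩ else ωm ⟨(j : ℕ) - kp, by omega⟩) *
        ∑ i : Fin (p + q + z), a i * Complex.normSq (Y i j) := by
  classical
  have hentry : ∀ c c' : Fin (kp + km),
      ∑ i : Fin (p + q + z), star (Y i c) *
        (if (i : ℕ) < p then (1:ℂ) else if (i : ℕ) < p + q then -1 else 0) * Y i c'
      = (if c = c' then (if (c : ℕ) < kp then (1:ℂ) else -1) else 0) := by
    intro c c'
    have h0 := congrFun (congrFun hYc c) c'
    have h1 : (Yᴴ * (Matrix.diagonal fun i : Fin (p + q + z) =>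
        if (i : ℕ) < p then (1 : ℂ) else if (i : ℕ) < p + q then -1 else 0) * Y) c c'
        = ∑ i : Fin (p + q + z), star (Y i c) *
          (if (i : ℕ) < p then (1:ℂ) else if (i : ℕ) < p + q then -1 else 0) * Y i c' := by
      rw [Matrix.mul_apply]
      refine Finset.sum_congr rfl fun i _ => ?_
      rw [Matrix.mul_diagonal, Matrix.conjTranspose_apply]
    have h2 : (Matrix.diagonal fun j : Fin (kp + km) =>
        if (j : ℕ) < kp then (1 : ℂ) else -1) c c'
        = (if c = c' then (if (c : ℕ) < kp then (1:ℂ) else -1) else 0) := by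
      by_cases h : c = c'
      · subst h; rw [Matrix.diagonal_apply_eq, if_pos rfl]
      · rw [Matrix.diagonal_apply_ne _ h, if_neg h]
    rw [← h1, ← h2]; exact h0
  -- generic Gram entry splitter
  have hsplit3 : ∀ c c' : Fin (kp + km),
      (∑ i : Fin p, star (Y ⟨(i:ℕ), by omega⟩ c) * Y ⟨(i:ℕ), by omega⟩ c')
      - (∑ i : Fin q, star (Y ⟨p + (i:ℕ), by omega⟩ c) * Y ⟨p + (i:ℕ), by omega⟩ c')
      = (if c = c' then (if (c : ℕ) < kp then (1:ℂ) else -1) else 0) := by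
    intro c c'
    have heq := hentry c c'
    rw [finSumSplit (p+q+z) p (by omega)] at heq
    rw [finSumSplit (p+q+z-p) q (by omega)] at heq
    have eA : (∑ i : Fin p, star (Y ⟨(i:ℕ), lt_of_lt_of_le i.isLt (by omega : p ≤ p+q+z)⟩ c) *
          (if ((⟨(i:ℕ), lt_of_lt_of_le i.isLt (by omega : p ≤ p+q+z)⟩ : Fin (p+q+z)) : ℕ) < p
            then (1:ℂ) else if ((⟨(i:ℕ), lt_of_lt_of_le i.isLt (by omega : p ≤ p+q+z)⟩ : Fin (p+q+z)) : ℕ) < p + q then -1 else 0) *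
          Y ⟨(i:ℕ), lt_of_lt_of_le i.isLt (by omega : p ≤ p+q+z)⟩ c')
        = ∑ i : Fin p, star (Y ⟨(i:ℕ), by omega⟩ c) * Y ⟨(i:ℕ), by omega⟩ c' := by
      refine Finset.sum_congr rfl fun i _ => ?_
      rw [if_pos i.isLt, mul_one]
    have eB : (∑ i : Fin q, star (Y ⟨p + ((⟨(i:ℕ), lt_of_lt_of_le i.isLt (by omega : q ≤ p+q+z-p)⟩ : Fin (p+q+z-p)):ℕ), by omega⟩ c) *
          (if ((⟨p + ((⟨(i:ℕ), lt_of_lt_of_le i.isLt (by omega : q ≤ p+q+z-p)⟩ : Fin (p+q+z-p)):ℕ), by omega⟩ : Fin (p+q+z)) : ℕ) < p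
            then (1:ℂ) else if ((⟨p + ((⟨(i:ℕ), lt_of_lt_of_le i.isLt (by omega : q ≤ p+q+z-p)⟩ : Fin (p+q+z-p)):ℕ), by omega⟩ : Fin (p+q+z)) : ℕ) < p + q then -1 else 0) *
          Y ⟨p + ((⟨(i:ℕ), lt_of_lt_of_le i.isLt (by omega : q ≤ p+q+z-p)⟩ : Fin (p+q+z-p)):ℕ), by omega⟩ c')
        = -(∑ i : Fin q, star (Y ⟨p + (i:ℕ), by omega⟩ c) * Y ⟨p + (i:ℕ), by omega⟩ c') := by
      rw [← Finset.sum_neg_distrib]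
      refine Finset.sum_congr rfl fun i _ => ?_
      rw [if_neg (by simp), if_pos (by simpa using by omega : ((⟨p + (i:ℕ), by omega⟩ : Fin (p+q+z)) : ℕ) < p + q)]
      ring
    have eC : (∑ i : Fin (p+q+z-p-q), star (Y ⟨p + ((⟨q + (i:ℕ), by omega⟩ : Fin (p+q+z-p)):ℕ), by omega⟩ c) *
          (if ((⟨p + ((⟨q + (i:ℕ), by omega⟩ : Fin (p+q+z-p)):ℕ), by omega⟩ : Fin (p+q+z)) : ℕ) < p
            then (1:ℂ) else if ((⟨p + ((⟨q + (i:ℕ), by omega⟩ : Fin (p+q+z-p)):ℕ), by omega⟩ : Fin (p+q+z)) : ℕ) < p + q then -1 else 0) *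
          Y ⟨p + ((⟨q + (i:ℕ), by omega⟩ : Fin (p+q+z-p)):ℕ), by omega⟩ c')
        = 0 := by
      refine Finset.sum_eq_zero fun i _ => ?_
      rw [if_neg (by simp), if_neg (by simp)]
      ring
    linear_combination heq - eA - eB - eC
  -- positive block Gram
  have hGramP : (((Matrix.of fun (i : Fin p) (j : Fin kp) =>
        Y ⟨(i:ℕ), by omega⟩ ⟨(j:ℕ), by omega⟩) : Matrix (Fin p) (Fin kp) ℂ)ᴴ *
      (Matrix.of fun (i : Fin p) (j : Fin kp) =>
        Y ⟨(i:ℕ), by omega⟩ ⟨(j:ℕ), by omega⟩) - 1).PosSemidef := by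
    have key : ((Matrix.of fun (i : Fin p) (j : Fin kp) =>
          Y ⟨(i:ℕ), by omega⟩ ⟨(j:ℕ), by omega⟩) : Matrix (Fin p) (Fin kp) ℂ)ᴴ *
        (Matrix.of fun (i : Fin p) (j : Fin kp) =>
          Y ⟨(i:ℕ), by omega⟩ ⟨(j:ℕ), by omega⟩) - 1
        = ((Matrix.of fun (i : Fin q) (j : Fin kp) =>
            Y ⟨p + (i:ℕ), by omega⟩ ⟨(j:ℕ), by omega⟩) : Matrix (Fin q) (Fin kp) ℂ)ᴴ *
          (Matrix.of fun (i : Fin q) (j : Fin kp) =>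
            Y ⟨p + (i:ℕ), by omega⟩ ⟨(j:ℕ), by omega⟩) := by
      ext j j'
      have hs := hsplit3 ⟨(j:ℕ), by omega⟩ ⟨(j':ℕ), by omega⟩
      have hc : (if (⟨(j:ℕ), by omega⟩ : Fin (kp+km)) = ⟨(j':ℕ), by omega⟩ then
          (if ((⟨(j:ℕ), by omega⟩ : Fin (kp+km)) : ℕ) < kp then (1:ℂ) else -1) else 0)
          = (if j = j' then (1:ℂ) else 0) := by
        by_cases h : j = j'
        · subst h
          rw [if_pos rfl, if_pos rfl, if_pos j.isLt]
        · rw [if_neg (by simp [Fin.ext_iff]; omega), if_neg h]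
      simp only [Matrix.sub_apply, Matrix.mul_apply, Matrix.conjTranspose_apply,
        Matrix.of_apply, Matrix.one_apply]
      linear_combination hs + hc
    rw [key]
    exact Matrix.posSemidef_conjTranspose_mul_self _
  -- negative block Gram
  have hGramM : (((Matrix.of fun (i : Fin q) (j : Fin km) =>
        Y ⟨p + (i:ℕ), by omega⟩ ⟨kp + (j:ℕ), by omega⟩) : Matrix (Fin q) (Fin km) ℂ)ᴴ *
      (Matrix.of fun (i : Fin q) (j : Fin km) =>
        Y ⟨p + (i:ℕ), by omega⟩ ⟨kp + (j:ℕ), by omega⟩) - 1).PosSemidef := by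
    have key : ((Matrix.of fun (i : Fin q) (j : Fin km) =>
          Y ⟨p + (i:ℕ), by omega⟩ ⟨kp + (j:ℕ), by omega⟩) : Matrix (Fin q) (Fin km) ℂ)ᴴ *
        (Matrix.of fun (i : Fin q) (j : Fin km) =>
          Y ⟨p + (i:ℕ), by omega⟩ ⟨kp + (j:ℕ), by omega⟩) - 1
        = ((Matrix.of fun (i : Fin p) (j : Fin km) =>
            Y ⟨(i:ℕ), by omega⟩ ⟨kp + (j:ℕ), by omega⟩) : Matrix (Fin p) (Fin km) ℂ)ᴴ *
          (Matrix.of fun (i : Fin p) (j : Fin km) =>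
            Y ⟨(i:ℕ), by omega⟩ ⟨kp + (j:ℕ), by omega⟩) := by
      ext j j'
      have hs := hsplit3 ⟨kp + (j:ℕ), by omega⟩ ⟨kp + (j':ℕ), by omega⟩
      have hc : (if (⟨kp + (j:ℕ), by omega⟩ : Fin (kp+km)) = ⟨kp + (j':ℕ), by omega⟩ then
          (if ((⟨kp + (j:ℕ), by omega⟩ : Fin (kp+km)) : ℕ) < kp then (1:ℂ) else -1) else 0)
          = -(if j = j' then (1:ℂ) else 0) := by
        by_cases h : j = j'
        · subst h
          rw [if_pos rfl, if_neg (by simp), if_pos rfl]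
        · rw [if_neg (by simp [Fin.ext_iff]; omega), if_neg h]
          ring
      simp only [Matrix.sub_apply, Matrix.mul_apply, Matrix.conjTranspose_apply,
        Matrix.of_apply, Matrix.one_apply]
      linear_combination -hs - hc
    rw [key]
    exact Matrix.posSemidef_conjTranspose_mul_self _
  -- extended sequences
  set bp : ℕ → ℝ := fun i => a ⟨min i (p-1), by omega⟩ with hbp
  set bq : ℕ → ℝ := fun i => a ⟨p + min i (q-1), by omega⟩ with hbq
  set wp : ℕ → ℝ := fun j => if h : j < kp then ωp ⟨j, h⟩ else 0 with hwp
  set wq : ℕ → ℝ := fun j => if h : j < km then ωm ⟨j, h⟩ else 0 with hwq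
  have hbp0 : ∀ i, 0 ≤ bp i := fun i => ha _
  have hbq0 : ∀ i, 0 ≤ bq i := fun i => ha _
  have hbpm : ∀ i, bp i ≤ bp (i+1) := by
    intro i
    apply hsortp
    · exact Fin.mk_le_mk.2 (by omega)
    · show min (i+1) (p-1) < p; omega
  have hbqm : ∀ i, bq i ≤ bq (i+1) := by
    intro i
    apply hsortm
    · show p ≤ p + min i (q-1); omega
    · exact Fin.mk_le_mk.2 (by omega)
    · show p + min (i+1) (q-1) < p + q; omega
  have hwp0 : ∀ j, 0 ≤ wp j := by
    intro j; rw [hwp]; dsimp only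
    split
    · exact hωp0 _
    · exact le_refl 0
  have hwq0 : ∀ j, 0 ≤ wq j := by
    intro j; rw [hwq]; dsimp only
    split
    · exact hωm0 _
    · exact le_refl 0
  have hwpa : ∀ j, wp (j+1) ≤ wp j := by
    intro j; rw [hwp]; dsimp only
    by_cases h1 : j + 1 < kp
    · rw [dif_pos h1, dif_pos (by omega : j < kp)]
      exact hωp (Fin.mk_le_mk.2 (by omega))
    · rw [dif_neg h1]
      by_cases h2 : j < kp
      · rw [dif_pos h2]; exact hωp0 _
      · rw [dif_neg h2]
  have hwqa : ∀ j, wq (j+1) ≤ wq j := by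
    intro j; rw [hwq]; dsimp only
    by_cases h1 : j + 1 < km
    · rw [dif_pos h1, dif_pos (by omega : j < km)]
      exact hωm (Fin.mk_le_mk.2 (by omega))
    · rw [dif_neg h1]
      by_cases h2 : j < km
      · rw [dif_pos h2]; exact hωm0 _
      · rw [dif_neg h2]
  have HP := masterGram p kp hkp bp wp hbp0 hbpm hwp0 hwpa _ hGramP
  have HM := masterGram q km hkm bq wq hbq0 hbqm hwq0 hwqa _ hGramM
  -- convert LHS of HP
  have convLP : ∑ j ∈ range kp, wp j * bp j = ∑ i : Fin kp, ωp i * a ⟨(i : ℕ), by omega⟩ := by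
    rw [← Fin.sum_univ_eq_sum_range (fun j => wp j * bp j) kp]
    refine Finset.sum_congr rfl fun i _ => ?_
    rw [hwp, hbp]; dsimp only
    rw [dif_pos i.isLt]
    congr 1
    exact congrArg a (Fin.ext (by simp; omega))
  have convLM : ∑ j ∈ range km, wq j * bq j = ∑ i : Fin km, ωm i * a ⟨p + (i : ℕ), by omega⟩ := by
    rw [← Fin.sum_univ_eq_sum_range (fun j => wq j * bq j) km]
    refine Finset.sum_congr rfl fun i _ => ?_
    rw [hwq, hbq]; dsimp only
    rw [dif_pos i.isLt]
    congr 1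
    exact congrArg a (Fin.ext (by simp; omega))
  have hTotalSplit : ∑ j : Fin (kp + km),
      (if h : (j : ℕ) < kp then ωp ⟨j, h⟩ else ωm ⟨(j : ℕ) - kp, by omega⟩) *
        ∑ i : Fin (p + q + z), a i * Complex.normSq (Y i j)
      = (∑ j : Fin kp, ωp j *
          ∑ i : Fin (p + q + z), a i * Complex.normSq (Y i ⟨(j:ℕ), by omega⟩)) +
        ∑ j : Fin km, ωm j *
          ∑ i : Fin (p + q + z), a i * Complex.normSq (Y i ⟨kp + (j:ℕ), by omega⟩) := by
    rw [finSumSplit (kp + km) kp (by omega)]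
    congr 1
    · refine Finset.sum_congr rfl fun j _ => ?_
      rw [dif_pos j.isLt]
    · refine Fintype.sum_equiv (finCongr (by omega : kp + km - kp = km)) _ _ fun j => ?_
      rw [dif_neg (by simp)]
      congr 1
      exact congrArg ωm (Fin.ext (by simp))
  rw [hTotalSplit]
  apply add_le_add
  · rw [← convLP]
    refine le_trans HP ?_
    rw [← Fin.sum_univ_eq_sum_range]
    apply Finset.sum_le_sum
    intro j _
    rw [hwp]; dsimp only
    rw [dif_pos j.isLt]
    have hj : ωp ⟨(j:ℕ), j.isLt⟩ = ωp j := congrArg ωp (Fin.eta j j.isLt)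
    rw [hj]
    apply mul_le_mul_of_nonneg_left ?_ (hωp0 j)
    calc (∑ i ∈ range p, bp i *
        (if h : i < p ∧ (j:ℕ) < kp then Complex.normSq ((Matrix.of fun (i : Fin p) (j : Fin kp) =>
          Y ⟨(i:ℕ), by omega⟩ ⟨(j:ℕ), by omega⟩) ⟨i, h.1⟩ ⟨(j:ℕ), h.2⟩) else 0))
        = ∑ i : Fin p, a ⟨(i:ℕ), by omega⟩ *
            Complex.normSq (Y ⟨(i:ℕ), by omega⟩ ⟨(j:ℕ), by omega⟩) := by
          rw [← Fin.sum_univ_eq_sum_range]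
          refine Finset.sum_congr rfl fun i _ => ?_
          rw [dif_pos ⟨i.isLt, j.isLt⟩]
          rw [hbp]; dsimp only [Matrix.of_apply]
          congr 1
          exact congrArg a (Fin.ext (by simp; omega))
      _ ≤ ∑ i : Fin (p+q+z), a i * Complex.normSq (Y i ⟨(j:ℕ), by omega⟩) := by
          rw [finSumSplit (p+q+z) p (by omega)]
          exact le_add_of_nonneg_right (Finset.sum_nonneg fun i _ =>
            mul_nonneg (ha _) (Complex.normSq_nonneg _))
  · rw [← convLM]
    refine le_trans HM ?_
    rw [← Fin.sum_univ_eq_sum_range]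
    apply Finset.sum_le_sum
    intro j _
    rw [hwq]; dsimp only
    rw [dif_pos j.isLt]
    have hj : ωm ⟨(j:ℕ), j.isLt⟩ = ωm j := congrArg ωm (Fin.eta j j.isLt)
    rw [hj]
    apply mul_le_mul_of_nonneg_left ?_ (hωm0 j)
    calc (∑ i ∈ range q, bq i *
        (if h : i < q ∧ (j:ℕ) < km then Complex.normSq ((Matrix.of fun (i : Fin q) (j : Fin km) =>
          Y ⟨p + (i:ℕ), by omega⟩ ⟨kp + (j:ℕ), by omega⟩) ⟨i, h.1⟩ ⟨(j:ℕ), h.2⟩) else 0))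
        = ∑ i : Fin q, a ⟨p + (i:ℕ), by omega⟩ *
            Complex.normSq (Y ⟨p + (i:ℕ), by omega⟩ ⟨kp + (j:ℕ), by omega⟩) := by
          rw [← Fin.sum_univ_eq_sum_range]
          refine Finset.sum_congr rfl fun i _ => ?_
          rw [dif_pos ⟨i.isLt, j.isLt⟩]
          rw [hbq]; dsimp only [Matrix.of_apply]
          congr 1
          exact congrArg a (Fin.ext (by simp; omega))
      _ ≤ ∑ i : Fin (p+q+z), a i * Complex.normSq (Y i ⟨kp + (j:ℕ), by omega⟩) := by
          rw [finSumSplit (p+q+z) p (by omega)]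
          rw [finSumSplit (p+q+z-p) q (by omega)]
          rw [← add_assoc]
          refine le_trans (le_add_of_nonneg_left ?_) (le_add_of_nonneg_right ?_)
          · exact Finset.sum_nonneg fun i _ =>
              mul_nonneg (ha _) (Complex.normSq_nonneg _)
          · exact Finset.sum_nonneg fun i _ =>
              mul_nonneg (ha _) (Complex.normSq_nonneg _)


/-- The paper's Corollary 3.3 in the diagonalizable case: with
`Uᴴ B U = J = diag(I_p, -I_q, 0_z)`, `Uᴴ A U = diag(a₁,…,aₙ) ⪰ 0`,
`D = diag(D₊, D₋)` block diagonal conformally with `J_k = diag(I_{k₊}, -I_{k₋})`,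
`D₊, D₋ ⪰ 0` with eigenvalues `ω₁⁺ ≥ … ≥ ω_{k₊}⁺ ≥ 0` and `ω₁⁻ ≥ … ≥ ω_{k₋}⁻ ≥ 0`,
the quantity `∑ ω_i⁺ a_i + ∑ ω_i⁻ a_{p+i}` is the minimum of
`Re(trace (D Xᴴ A X))` over `Xᴴ B X = J_k`. -/
theorem trace_inf_indefinite_B_mixed_constraint
    (p q z kp km : ℕ) (hp : 1 ≤ p) (hq : 1 ≤ q) (hk : 1 ≤ kp + km)
    (hkp : kp ≤ p) (hkm : km ≤ q)
    (A B : Matrix (Fin (p + q + z)) (Fin (p + q + z)) ℂ)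
    (hA : A.IsHermitian) (hB : B.IsHermitian)
    (U : Matrix (Fin (p + q + z)) (Fin (p + q + z)) ℂ) (hU : IsUnit U)
    (a : Fin (p + q + z) → ℝ) (ha : ∀ i, 0 ≤ a i)
    (hsortp : ∀ i j : Fin (p + q + z), i ≤ j → (j : ℕ) < p → a i ≤ a j)
    (hsortm : ∀ i j : Fin (p + q + z), p ≤ (i : ℕ) → i ≤ j → (j : ℕ) < p + q → a i ≤ a j)
    (hUB : Uᴴ * B * U = Matrix.diagonal fun i : Fin (p + q + z) =>
      if (i : ℕ) < p then (1 : ℂ) else if (i : ℕ) < p + q then -1 else 0)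
    (hUA : Uᴴ * A * U = Matrix.diagonal fun i => (a i : ℂ))
    (Dp : Matrix (Fin kp) (Fin kp) ℂ) (hDp : Dp.PosSemidef)
    (Dm : Matrix (Fin km) (Fin km) ℂ) (hDm : Dm.PosSemidef)
    (Qp : Matrix (Fin kp) (Fin kp) ℂ) (hQp : Qpᴴ * Qp = 1)
    (ωp : Fin kp → ℝ) (hωp : Antitone ωp) (hωp0 : ∀ i, 0 ≤ ωp i)
    (hQDp : Qpᴴ * Dp * Qp = Matrix.diagonal fun i => (ωp i : ℂ))
    (Qm : Matrix (Fin km) (Fin km) ℂ) (hQm : Qmᴴ * Qm = 1)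
    (ωm : Fin km → ℝ) (hωm : Antitone ωm) (hωm0 : ∀ i, 0 ≤ ωm i)
    (hQDm : Qmᴴ * Dm * Qm = Matrix.diagonal fun i => (ωm i : ℂ)) :
    IsLeast {t : ℝ | ∃ X : Matrix (Fin (p + q + z)) (Fin (kp + km)) ℂ,
        Xᴴ * B * X =
          (Matrix.diagonal fun i : Fin (kp + km) =>
            if (i : ℕ) < kp then (1 : ℂ) else -1) ∧
        t = (Matrix.trace
          ((Matrix.reindex finSumFinEquiv finSumFinEquiv
              (Matrix.fromBlocks Dp 0 0 Dm)) * (Xᴴ * A * X))).re}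
      ((∑ i : Fin kp, ωp i * a ⟨(i : ℕ), by have := i.isLt; omega⟩) +
       (∑ i : Fin km, ωm i * a ⟨p + (i : ℕ), by have := i.isLt; omega⟩)) := by
  classical
  obtain ⟨Vu, hUV⟩ := hU.exists_right_inv
  have hVU : Vu * U = 1 := mul_eq_one_comm.mp hUV
  have hQp2 : Qp * Qpᴴ = 1 := mul_eq_one_comm.mp hQp
  have hQm2 : Qm * Qmᴴ = 1 := mul_eq_one_comm.mp hQm
  set e := finSumFinEquiv (m := kp) (n := km) with he
  set Q : Matrix (Fin (kp+km)) (Fin (kp+km)) ℂ :=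
    Matrix.reindex e e (Matrix.fromBlocks Qp 0 0 Qm) with hQ
  have helim : ∀ {α : Type} (f : Fin kp → α) (g : Fin km → α) (j : Fin (kp+km)),
      Sum.elim f g (e.symm j) =
        if h : (j:ℕ) < kp then f ⟨j, h⟩ else g ⟨(j:ℕ) - kp, by omega⟩ := by
    intro α f g j
    by_cases h : (j:ℕ) < kp
    · rw [dif_pos h]
      have hj : j = Fin.castAdd km ⟨(j:ℕ), h⟩ := Fin.ext rfl
      conv_lhs => rw [hj]
      rw [he, finSumFinEquiv_symm_apply_castAdd, Sum.elim_inl]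
    · rw [dif_neg h]
      have hj : j = Fin.natAdd kp ⟨(j:ℕ) - kp, by omega⟩ := Fin.ext (by simp; omega)
      conv_lhs => rw [hj]
      rw [he, finSumFinEquiv_symm_apply_natAdd, Sum.elim_inr]
  have hQQ : Qᴴ * Q = 1 := by
    rw [hQ]
    simp only [Matrix.reindex_apply, Matrix.conjTranspose_submatrix,
      Matrix.fromBlocks_conjTranspose, Matrix.submatrix_mul_equiv,
      Matrix.fromBlocks_multiply]
    simp [hQp, hQm, Matrix.fromBlocks_one]
  have hQQ' : Q * Qᴴ = 1 := mul_eq_one_comm.mp hQQ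
  have hQD : Qᴴ * (Matrix.reindex e e (Matrix.fromBlocks Dp 0 0 Dm)) * Q =
      Matrix.diagonal (fun j : Fin (kp+km) =>
        ((if h : (j:ℕ) < kp then ωp ⟨j, h⟩ else ωm ⟨(j:ℕ) - kp, by omega⟩ : ℝ) : ℂ)) := by
    rw [hQ]
    simp only [Matrix.reindex_apply, Matrix.conjTranspose_submatrix,
      Matrix.fromBlocks_conjTranspose, Matrix.submatrix_mul_equiv,
      Matrix.fromBlocks_multiply]
    simp only [Matrix.mul_zero, Matrix.zero_mul, add_zero, zero_add,
      Matrix.conjTranspose_zero]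
    rw [hQDp, hQDm, Matrix.fromBlocks_diagonal, Matrix.submatrix_diagonal_equiv]
    refine congrArg Matrix.diagonal (funext fun j => ?_)
    rw [Function.comp_apply, helim (fun i => ((ωp i : ℝ) : ℂ)) (fun i => ((ωm i : ℝ) : ℂ)) j]
    by_cases h : (j:ℕ) < kp
    · rw [dif_pos h, dif_pos h]
    · rw [dif_neg h, dif_neg h]
  have hηblocks : (Matrix.diagonal fun j : Fin (kp+km) =>
      if (j:ℕ) < kp then (1:ℂ) else -1) =
      Matrix.reindex e e (Matrix.fromBlocks 1 0 0 (-1)) := by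
    have h1 : (Matrix.fromBlocks (1 : Matrix (Fin kp) (Fin kp) ℂ) 0 0
        (-1 : Matrix (Fin km) (Fin km) ℂ)) =
        Matrix.fromBlocks (Matrix.diagonal fun _ => (1:ℂ)) 0 0
          (Matrix.diagonal fun _ => (-1:ℂ)) := by
      ext i j
      rcases i with i | i <;> rcases j with j | j <;>
        simp [Matrix.one_apply, Matrix.diagonal_apply] <;>
        by_cases h : i = j <;> simp [h]
    rw [h1, Matrix.fromBlocks_diagonal]
    rw [Matrix.reindex_apply, Matrix.submatrix_diagonal_equiv]
    refine congrArg Matrix.diagonal (funext fun j => ?_)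
    rw [Function.comp_apply, helim (fun _ => (1:ℂ)) (fun _ => (-1:ℂ)) j]
    by_cases h : (j:ℕ) < kp
    · rw [if_pos h, dif_pos h]
    · rw [if_neg h, dif_neg h]
  have hQJ : Q * (Matrix.diagonal fun j : Fin (kp+km) =>
      if (j:ℕ) < kp then (1:ℂ) else -1) * Qᴴ =
      (Matrix.diagonal fun j : Fin (kp+km) => if (j:ℕ) < kp then (1:ℂ) else -1) := by
    rw [hηblocks, hQ]
    simp only [Matrix.reindex_apply, Matrix.conjTranspose_submatrix,
      Matrix.fromBlocks_conjTranspose, Matrix.submatrix_mul_equiv,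
      Matrix.fromBlocks_multiply]
    simp [hQp2, hQm2]
  have hQJ' : Qᴴ * (Matrix.diagonal fun j : Fin (kp+km) =>
      if (j:ℕ) < kp then (1:ℂ) else -1) * Q =
      (Matrix.diagonal fun j : Fin (kp+km) => if (j:ℕ) < kp then (1:ℂ) else -1) := by
    rw [hηblocks, hQ]
    simp only [Matrix.reindex_apply, Matrix.conjTranspose_submatrix,
      Matrix.fromBlocks_conjTranspose, Matrix.submatrix_mul_equiv,
      Matrix.fromBlocks_multiply]
    simp [hQp, hQm]
  have hVuU : Vuᴴ * Uᴴ = 1 := by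
    rw [← Matrix.conjTranspose_mul, hUV, Matrix.conjTranspose_one]
  have halg : ∀ (M : Matrix (Fin (p+q+z)) (Fin (p+q+z)) ℂ)
      (X : Matrix (Fin (p+q+z)) (Fin (kp+km)) ℂ),
      (Vu * X * Q)ᴴ * (Uᴴ * M * U) * (Vu * X * Q) = Qᴴ * (Xᴴ * M * X) * Q := by
    intro M X
    simp only [Matrix.conjTranspose_mul, Matrix.mul_assoc]
    rw [← Matrix.mul_assoc Vuᴴ Uᴴ, hVuU, Matrix.one_mul]
    rw [← Matrix.mul_assoc U Vu, hUV, Matrix.one_mul]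
  have htrconj : ∀ (D M : Matrix (Fin (kp+km)) (Fin (kp+km)) ℂ),
      Matrix.trace ((Qᴴ * D * Q) * (Qᴴ * M * Q)) = Matrix.trace (D * M) := by
    intro D M
    calc Matrix.trace ((Qᴴ * D * Q) * (Qᴴ * M * Q)) = Matrix.trace (Qᴴ * (D * (M * Q))) := by
          simp only [Matrix.mul_assoc]
          rw [← Matrix.mul_assoc Q Qᴴ, hQQ', Matrix.one_mul]
    _ = Matrix.trace ((D * (M * Q)) * Qᴴ) := Matrix.trace_mul_comm _ _
    _ = Matrix.trace (D * M) := by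
          simp only [Matrix.mul_assoc]
          rw [hQQ', Matrix.mul_one]
  have hTr : ∀ X : Matrix (Fin (p+q+z)) (Fin (kp+km)) ℂ,
      Matrix.trace ((Matrix.reindex e e (Matrix.fromBlocks Dp 0 0 Dm)) * (Xᴴ * A * X))
      = Matrix.trace ((Matrix.diagonal (fun j : Fin (kp+km) =>
          ((if h : (j:ℕ) < kp then ωp ⟨j, h⟩ else ωm ⟨(j:ℕ) - kp, by omega⟩ : ℝ) : ℂ)))
        * ((Vu * X * Q)ᴴ * (Matrix.diagonal fun i => (a i : ℂ)) * (Vu * X * Q))) := by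
    intro X
    have hinner : (Vu * X * Q)ᴴ * (Matrix.diagonal fun i => (a i : ℂ)) * (Vu * X * Q)
        = Qᴴ * (Xᴴ * A * X) * Q := by
      rw [← hUA]
      exact halg A X
    rw [hinner, ← hQD]
    exact (htrconj _ _).symm
  have hVal : ∀ Y : Matrix (Fin (p+q+z)) (Fin (kp+km)) ℂ,
      (Matrix.trace ((Matrix.diagonal (fun j : Fin (kp+km) =>
          ((if h : (j:ℕ) < kp then ωp ⟨j, h⟩ else ωm ⟨(j:ℕ) - kp, by omega⟩ : ℝ) : ℂ)))
        * (Yᴴ * (Matrix.diagonal fun i => (a i : ℂ)) * Y))).re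
      = ∑ j : Fin (kp+km),
          (if h : (j:ℕ) < kp then ωp ⟨j, h⟩ else ωm ⟨(j:ℕ) - kp, by omega⟩) *
            ∑ i : Fin (p+q+z), a i * Complex.normSq (Y i j) := by
    intro Y
    have hterm : ∀ (i : Fin (p+q+z)) (j : Fin (kp+km)),
        star (Y i j) * ((a i : ℂ) * Y i j)
        = ((a i * Complex.normSq (Y i j) : ℝ) : ℂ) := by
      intro i j
      rw [Complex.ofReal_mul, Complex.normSq_eq_conj_mul_self]
      rw [show star (Y i j) = (starRingEnd ℂ) (Y i j) from rfl]
      ring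
    have h1 : Matrix.trace ((Matrix.diagonal (fun j : Fin (kp+km) =>
          ((if h : (j:ℕ) < kp then ωp ⟨j, h⟩ else ωm ⟨(j:ℕ) - kp, by omega⟩ : ℝ) : ℂ)))
        * (Yᴴ * (Matrix.diagonal fun i => (a i : ℂ)) * Y))
        = ∑ j : Fin (kp+km),
          ((if h : (j:ℕ) < kp then ωp ⟨j, h⟩ else ωm ⟨(j:ℕ) - kp, by omega⟩ : ℝ) : ℂ) *
            ∑ i : Fin (p+q+z), star (Y i j) * ((a i : ℂ) * Y i j) := by
      rw [Matrix.trace]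
      refine Finset.sum_congr rfl fun j _ => ?_
      rw [Matrix.diag]
      rw [Matrix.diagonal_mul]
      congr 1
      rw [Matrix.mul_apply]
      refine Finset.sum_congr rfl fun i _ => ?_
      rw [Matrix.mul_diagonal, Matrix.conjTranspose_apply]
      ring
    rw [h1, Complex.re_sum]
    refine Finset.sum_congr rfl fun j _ => ?_
    rw [Complex.re_ofReal_mul]
    congr 1
    have h2 : ∑ i : Fin (p+q+z), star (Y i j) * ((a i : ℂ) * Y i j)
        = ((∑ i : Fin (p+q+z), a i * Complex.normSq (Y i j) : ℝ) : ℂ) := by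
      rw [Complex.ofReal_sum]
      exact Finset.sum_congr rfl fun i _ => hterm i j
    rw [h2, Complex.ofReal_re]
  have hrec : ∀ W : Matrix (Fin (kp+km)) (Fin (kp+km)) ℂ, Q * (Qᴴ * W * Q) * Qᴴ = W := by
    intro W
    simp only [Matrix.mul_assoc]
    rw [hQQ', Matrix.mul_one, ← Matrix.mul_assoc Q Qᴴ, hQQ', Matrix.one_mul]
  constructor
  · -- membership
    set cI : Fin (kp+km) → Fin (p+q+z) := fun j =>
      if h : (j:ℕ) < kp then ⟨(j:ℕ), by omega⟩ else ⟨p + (j:ℕ) - kp, by omega⟩ with hcI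
    set E : Matrix (Fin (p+q+z)) (Fin (kp+km)) ℂ :=
      Matrix.of fun i j => if i = cI j then (1:ℂ) else 0 with hE
    have hcinj : Function.Injective cI := by
      intro j j' hjj
      rw [hcI] at hjj; dsimp only at hjj
      by_cases h : (j:ℕ) < kp <;> by_cases h' : (j':ℕ) < kp <;>
        rw [Fin.ext_iff] <;> simp [h, h', Fin.ext_iff] at hjj <;> omega
    have hEdiag : ∀ d : Fin (p+q+z) → ℂ,
        Eᴴ * Matrix.diagonal d * E = Matrix.diagonal (fun j => d (cI j)) := by
      intro d
      ext j j'
      have h1 : (Eᴴ * Matrix.diagonal d * E) j j'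
          = ∑ i : Fin (p+q+z), star (E i j) * d i * E i j' := by
        rw [Matrix.mul_apply]
        refine Finset.sum_congr rfl fun i _ => ?_
        rw [Matrix.mul_diagonal, Matrix.conjTranspose_apply]
      rw [h1]
      rw [Finset.sum_eq_single (cI j)]
      · rw [hE]; dsimp only [Matrix.of_apply]
        rw [if_pos rfl]
        by_cases hjj : j = j'
        · subst hjj; rw [if_pos rfl, Matrix.diagonal_apply_eq]; simp
        · rw [if_neg (fun hcc => hjj (hcinj hcc)), Matrix.diagonal_apply_ne _ hjj]; simp
      · intro i _ hne
        rw [hE]; dsimp only [Matrix.of_apply]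
        rw [if_neg hne]; simp
      · intro hmm; exact absurd (Finset.mem_univ _) hmm
    have hX0Q : Vu * (U * (E * Qᴴ)) * Q = E := by
      rw [← Matrix.mul_assoc Vu U, hVU, Matrix.one_mul, Matrix.mul_assoc E Qᴴ Q, hQQ,
        Matrix.mul_one]
    have hεcI : (fun j : Fin (kp+km) =>
        (if ((cI j):ℕ) < p then (1:ℂ) else if ((cI j):ℕ) < p+q then -1 else 0))
        = fun j : Fin (kp+km) => if (j:ℕ) < kp then (1:ℂ) else -1 := by
      funext j; rw [hcI]; dsimp only
      by_cases h : (j:ℕ) < kp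
      · simp only [dif_pos h, if_pos h]
        exact if_pos (by simpa using by omega)
      · simp only [dif_neg h, if_neg h]
        rw [if_neg (by simpa using by omega), if_pos (by simpa using by omega)]
    have hmem1 : (U * (E * Qᴴ))ᴴ * B * (U * (E * Qᴴ)) = Matrix.diagonal
        (fun j : Fin (kp + km) => if (j : ℕ) < kp then (1:ℂ) else -1) := by
      have hh := halg B (U * (E * Qᴴ))
      rw [hUB, hX0Q, hEdiag] at hh
      calc (U * (E * Qᴴ))ᴴ * B * (U * (E * Qᴴ))
          = Q * (Qᴴ * ((U * (E * Qᴴ))ᴴ * B * (U * (E * Qᴴ))) * Q) * Qᴴ := (hrec _).symm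
      _ = Q * (Matrix.diagonal fun j => (if ((cI j):ℕ) < p then (1:ℂ)
            else if ((cI j):ℕ) < p+q then -1 else 0)) * Qᴴ := by rw [← hh]
      _ = Q * (Matrix.diagonal fun j : Fin (kp+km) =>
            if (j:ℕ) < kp then (1:ℂ) else -1) * Qᴴ := by rw [hεcI]
      _ = _ := hQJ
    refine ⟨U * (E * Qᴴ), hmem1, ?_⟩
    rw [hTr (U * (E * Qᴴ)), hX0Q, hEdiag]
    rw [Matrix.diagonal_mul_diagonal, Matrix.trace_diagonal]
    have hre : (∑ j : Fin (kp+km),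
        ((if h : (j:ℕ) < kp then ωp ⟨j, h⟩ else ωm ⟨(j:ℕ) - kp, by omega⟩ : ℝ) : ℂ) *
          ((a (cI j) : ℝ) : ℂ)).re
        = ∑ j : Fin (kp+km),
          (if h : (j:ℕ) < kp then ωp ⟨j, h⟩ else ωm ⟨(j:ℕ) - kp, by omega⟩) * a (cI j) := by
      rw [Complex.re_sum]
      refine Finset.sum_congr rfl fun j _ => ?_
      rw [← Complex.ofReal_mul, Complex.ofReal_re]
    rw [hre]
    rw [finSumSplit (kp+km) kp (by omega)]
    congr 1
    · refine Finset.sum_congr rfl fun j _ => ?_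
      rw [dif_pos j.isLt, hcI]; dsimp only
      rw [dif_pos (show ((⟨(j:ℕ), lt_of_lt_of_le j.isLt (by omega)⟩ : Fin (kp+km)):ℕ) < kp
        from j.isLt)]
    · refine (Fintype.sum_equiv (finCongr (by omega : kp + km - kp = km)) _ _ fun j => ?_).symm
      rw [dif_neg (by simp), hcI]; dsimp only
      rw [dif_neg (by simp)]
      congr 1
      · exact congrArg ωm (Fin.ext (by simp))
      · exact congrArg a (Fin.ext (by simp; omega))
  · -- lower bound
    rintro t ⟨X, hXc, ht⟩
    have hYc : (Vu * X * Q)ᴴ * (Matrix.diagonal fun i : Fin (p + q + z) =>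
        if (i : ℕ) < p then (1 : ℂ) else if (i : ℕ) < p + q then -1 else 0) * (Vu * X * Q)
        = Matrix.diagonal fun j : Fin (kp + km) => if (j : ℕ) < kp then (1 : ℂ) else -1 := by
      rw [← hUB, halg B X, hXc]
      exact hQJ'
    have hred := reducedLB p q z kp km hp hq hkp hkm a ha hsortp hsortm
      ωp hωp hωp0 ωm hωm hωm0 (Vu * X * Q) hYc
    rw [ht, hTr X, hVal (Vu * X * Q)]
    exact hred
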